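/- For relatively prime positive integers s and t, the sequence a_{s,t}(n) satisfies, for n > s+t, the recurrence a_{s,t}(n) = a_{s,t}(n − s − t) + Σ_{r=0}^{s−1} a_{s,t}(n − r − ⌈(r·t+1)/s⌉). -/

import Mathlib

/-- `l` is a composition of `n`: a list of positive integers summing to `n`. -/
def IsComposition (n : ℕ) (l : List ℕ) : Prop := (∀ x ∈ l, 0 < x) ∧ l.sum = n

/-- The scaled Arndt condition: `s * c_{2i-1} > t * c_{2i}` for each pair
(0-indexed: `s * l[2i] > t * l[2i+1]`). -/
def ArndtCond (s t : ℕ) (l : List ℕ) : Prop :=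
  ∀ i : ℕ, 2 * i + 1 < l.length → t * l[2 * i + 1]! < s * l[2 * i]!

/-- `a_{s,t}(n)`: the number of scaled Arndt compositions of `n`. -/
noncomputable def arndtCount (s t n : ℕ) : ℕ :=
  Nat.card {l : List ℕ // IsComposition n l ∧ ArndtCond s t l}

/-- Number of compositions of `n` with all parts in the set `A`. -/
noncomputable def compCount (A : Set ℕ) (n : ℕ) : ℕ :=
  Nat.card {l : List ℕ // IsComposition n l ∧ ∀ x ∈ l, x ∈ A}

/-! basics -/

lemma arndt_nil (s t : ℕ) : ArndtCond s t [] := by intro i hi; simp at hi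

lemma arndt_single (s t x : ℕ) : ArndtCond s t [x] := by
  intro i hi; simp at hi

lemma arndt_cons (s t x y : ℕ) (l : List ℕ) :
    ArndtCond s t (x :: y :: l) ↔ t * y < s * x ∧ ArndtCond s t l := by
  constructor
  · intro h
    refine ⟨?_, ?_⟩
    · have := h 0 (by simp)
      simpa using this
    · intro i hi
      have := h (i + 1) (by simp; omega)
      have e1 : 2 * (i + 1) + 1 = (2 * i + 1) + 2 := by ring
      have e2 : 2 * (i + 1) = (2 * i) + 2 := by ring
      rw [e1, e2] at this
      simpa [List.getElem!_cons_succ] using this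
  · rintro ⟨h1, h2⟩ i hi
    match i with
    | 0 => simpa using h1
    | (j + 1) =>
      have e1 : 2 * (j + 1) + 1 = (2 * j + 1) + 2 := by ring
      have e2 : 2 * (j + 1) = (2 * j) + 2 := by ring
      rw [e1, e2]
      simp only [List.getElem!_cons_succ]
      exact h2 j (by simp at hi; omega)

lemma AC_finite (s t n : ℕ) : {l : List ℕ | IsComposition n l ∧ ArndtCond s t l}.Finite := by
  rw [← Set.finite_coe_iff]
  exact Finite.of_injective
    (fun l => (⟨l.1, fun {i} hi => l.2.1.1 i hi, l.2.1.2⟩ : Composition n))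
    (by
      rintro ⟨l, hl⟩ ⟨m, hm⟩ h
      exact Subtype.ext (congrArg Composition.blocks h))

noncomputable def Cfin (s t n : ℕ) : Finset (List ℕ) := (AC_finite s t n).toFinset

lemma mem_Cfin {s t n : ℕ} {l : List ℕ} :
    l ∈ Cfin s t n ↔ IsComposition n l ∧ ArndtCond s t l := by
  simp [Cfin]

lemma arndtCount_eq_card (s t n : ℕ) : arndtCount s t n = (Cfin s t n).card := by
  have h1 : arndtCount s t n
      = Nat.card ↥{l : List ℕ | IsComposition n l ∧ ArndtCond s t l} := rfl
  rw [h1, Nat.card_coe_set_eq, Set.ncard_eq_toFinset_card _ (AC_finite s t n)]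
  rfl

lemma arndtCount_zero (s t : ℕ) : arndtCount s t 0 = 1 := by
  rw [arndtCount_eq_card]
  have : Cfin s t 0 = {[]} := by
    ext l
    simp only [mem_Cfin, Finset.mem_singleton]
    constructor
    · rintro ⟨⟨hpos, hsum⟩, -⟩
      cases l with
      | nil => rfl
      | cons x xs =>
        exfalso
        have hx := hpos x (by simp)
        simp at hsum; omega
    · rintro rfl
      exact ⟨⟨by simp, by simp⟩, arndt_nil s t⟩
  rw [this]; rfl

/-! the first-pair decomposition -/

def pairSet (s t n : ℕ) : Finset (ℕ × ℕ) :=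
  (Finset.Icc 1 n ×ˢ Finset.Icc 1 n).filter fun p => t * p.2 < s * p.1 ∧ p.1 + p.2 ≤ n

lemma key_decomp (s t n : ℕ) (hn : 1 ≤ n) :
    Cfin s t n = insert [n]
      ((pairSet s t n).biUnion fun p =>
        (Cfin s t (n - p.1 - p.2)).image fun l => p.1 :: p.2 :: l) := by
  ext l
  simp only [mem_Cfin, Finset.mem_insert, Finset.mem_biUnion, Finset.mem_image, pairSet,
    Finset.mem_filter, Finset.mem_product, Finset.mem_Icc]
  constructor
  · rintro ⟨⟨hpos, hsum⟩, harndt⟩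
    match l with
    | [] => simp at hsum; omega
    | [x] => left; simp at hsum; rw [hsum]
    | x :: y :: rest =>
      right
      have hx : 0 < x := hpos x (by simp)
      have hy : 0 < y := hpos y (by simp)
      simp only [List.sum_cons] at hsum
      have hxy : t * y < s * x := (arndt_cons s t x y rest).1 harndt |>.1
      have hrest : ArndtCond s t rest := (arndt_cons s t x y rest).1 harndt |>.2
      refine ⟨(x, y), ⟨⟨⟨hx, by omega⟩, ⟨hy, by omega⟩⟩, hxy, by omega⟩, rest,
        ⟨⟨fun z hz => hpos z (by simp [hz]), by simp; omega⟩, hrest⟩, rfl⟩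
  · rintro (rfl | ⟨⟨x, y⟩, ⟨⟨⟨hx, -⟩, ⟨hy, -⟩⟩, hxy, hle⟩, rest, ⟨⟨hpos, hsum⟩, harndt⟩, rfl⟩)
    · exact ⟨⟨by intro z hz; simp at hz; omega, by simp⟩, arndt_single s t n⟩
    · refine ⟨⟨?_, ?_⟩, (arndt_cons s t x y rest).2 ⟨hxy, harndt⟩⟩
      · intro z hz
        simp only [List.mem_cons] at hz
        rcases hz with rfl | rfl | hz
        · exact hx
        · exact hy
        · exact hpos z hz
      · simp only [List.sum_cons, hsum]; omega

lemma L1a (s t n : ℕ) (hn : 1 ≤ n) :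
    arndtCount s t n = 1 + ∑ p ∈ pairSet s t n, arndtCount s t (n - p.1 - p.2) := by
  rw [arndtCount_eq_card, key_decomp s t n hn]
  rw [Finset.card_insert_of_notMem (by
    simp only [Finset.mem_biUnion, Finset.mem_image, not_exists]
    rintro p ⟨-, l, -, h⟩
    have := congrArg List.length h
    simp at this)]
  rw [Finset.card_biUnion (by
    rintro p hp q hq hpq
    rw [Function.onFun, Finset.disjoint_left]
    rintro l hlp hlq
    simp only [Finset.mem_image] at hlp hlq
    obtain ⟨u, -, hu⟩ := hlp
    obtain ⟨v, -, hv⟩ := hlq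
    apply hpq
    rw [← hu] at hv
    simp only [List.cons.injEq] at hv
    exact (Prod.ext hv.1 hv.2.1).symm)]
  rw [add_comm]
  congr 1
  apply Finset.sum_congr rfl
  intro p hp
  rw [Finset.card_image_of_injective _ (by
    intro a b hab; simpa using hab), arndtCount_eq_card]

/-! the summation functions -/

/-- `g` function: `g(c) = c + ⌊tc/s⌋ + 1`. -/
def gf (s t c : ℕ) : ℕ := c + t * c / s + 1

noncomputable def Sc (s t m : ℕ) : ℕ := ∑ k ∈ Finset.Icc 0 m, arndtCount s t k

noncomputable def Tn (s t n : ℕ) : ℕ :=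
  ∑ c ∈ Finset.Icc 1 n, if gf s t c ≤ n then Sc s t (n - gf s t c) else 0

noncomputable def un (s t n : ℕ) : ℕ :=
  ∑ c ∈ Finset.Icc 1 n, if gf s t c ≤ n then arndtCount s t (n - gf s t c) else 0

lemma innerSumLem (s t n c : ℕ) (hs : 0 < s) (hc1 : 1 ≤ c) (hcn : c ≤ n) :
    (∑ c1 ∈ Finset.Icc 1 n, if t * c < s * c1 ∧ c1 + c ≤ n
        then arndtCount s t (n - c1 - c) else 0)
      = if gf s t c ≤ n then Sc s t (n - gf s t c) else 0 := by
  obtain ⟨q, hq⟩ : ∃ q, t * c / s = q := ⟨_, rfl⟩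
  have hgm : gf s t c = c + (q + 1) := by rw [gf, hq, Nat.add_assoc]
  have hcond : ∀ c1, (t * c < s * c1) ↔ q + 1 ≤ c1 := by
    intro c1
    constructor
    · intro h
      have h' : t * c < c1 * s := by rwa [mul_comm c1 s]
      have h2 : t * c / s < c1 := (Nat.div_lt_iff_lt_mul hs).2 h'
      rw [hq] at h2; omega
    · intro h
      have h2 : t * c / s < c1 := by rw [hq]; omega
      have := (Nat.div_lt_iff_lt_mul hs).1 h2
      rwa [mul_comm c1 s] at this
  rw [← Finset.sum_filter]
  have hfilter : (Finset.Icc 1 n).filter (fun c1 => t * c < s * c1 ∧ c1 + c ≤ n)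
      = Finset.Icc (q + 1) (n - c) := by
    ext a
    simp only [Finset.mem_filter, Finset.mem_Icc, hcond]
    omega
  rw [hfilter, hgm]
  by_cases hg : c + (q + 1) ≤ n
  · rw [if_pos hg, Sc]
    refine Finset.sum_nbij' (fun c1 => n - c - c1) (fun k => n - c - k) ?_ ?_ ?_ ?_ ?_
    · intro a ha; simp only [Finset.mem_Icc] at ha ⊢; omega
    · intro a ha; simp only [Finset.mem_Icc] at ha ⊢; omega
    · intro a ha; simp only [Finset.mem_Icc] at ha; show n - c - (n - c - a) = a; omega
    · intro a ha; simp only [Finset.mem_Icc] at ha; show n - c - (n - c - a) = a; omega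
    · intro a ha
      simp only [Finset.mem_Icc] at ha
      show arndtCount s t (n - a - c) = arndtCount s t (n - c - a)
      congr 1
      omega
  · rw [if_neg hg]
    have : Finset.Icc (q + 1) (n - c) = ∅ := by
      apply Finset.Icc_eq_empty
      omega
    rw [this, Finset.sum_empty]

lemma L1b (s t n : ℕ) (hs : 0 < s) :
    ∑ p ∈ pairSet s t n, arndtCount s t (n - p.1 - p.2) = Tn s t n := by
  rw [pairSet, Finset.sum_filter, Finset.sum_product_right]
  rw [Tn]
  apply Finset.sum_congr rfl
  intro c hc
  simp only [Finset.mem_Icc] at hc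
  rw [← innerSumLem s t n c hs hc.1 hc.2]

lemma L1 (s t n : ℕ) (hs : 0 < s) : arndtCount s t n = 1 + Tn s t n := by
  rcases Nat.eq_zero_or_pos n with rfl | hn
  · rw [arndtCount_zero, Tn]; simp
  · rw [L1a s t n hn, L1b s t n hs]

/-! properties of `gf` -/

lemma gf_ge (s t c : ℕ) : c + 1 ≤ gf s t c := by
  rw [gf]
  exact Nat.succ_le_succ (Nat.le_add_right c _)

lemma gf_mono (s t : ℕ) {c d : ℕ} (h : c ≤ d) : gf s t c ≤ gf s t d := by
  rw [gf, gf]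
  exact Nat.add_le_add (Nat.add_le_add h
    (Nat.div_le_div_right (Nat.mul_le_mul le_rfl h))) le_rfl

lemma gf_shift (s t c : ℕ) (hs : 0 < s) : gf s t (c + s) = gf s t c + (s + t) := by
  have h1 : t * (c + s) = t * c + t * s := by ring
  rw [gf, gf, h1, Nat.add_mul_div_right _ _ hs]
  obtain ⟨q, hq⟩ : ∃ q, t * c / s = q := ⟨_, rfl⟩
  rw [hq]
  ring

lemma gf_zero (s t : ℕ) : gf s t 0 = 1 := by simp [gf]

lemma gf_s (s t : ℕ) (hs : 0 < s) : gf s t s = s + t + 1 := by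
  have := gf_shift s t 0 hs
  rw [gf_zero] at this
  simp only [Nat.zero_add] at this
  omega

lemma gf_big (s t c : ℕ) (hs : 0 < s) (hc : s ≤ c) : c + t + 1 ≤ gf s t c := by
  rw [gf]
  have h1 : t * s / s = t := Nat.mul_div_left t hs
  have h2 : t ≤ t * c / s := by
    have h3 : t * s / s ≤ t * c / s := Nat.div_le_div_right (Nat.mul_le_mul le_rfl hc)
    rwa [h1] at h3
  exact Nat.succ_le_succ (Nat.add_le_add_left h2 c)

/-! step lemmas -/

lemma Tsucc (s t n : ℕ) : Tn s t (n + 1) = Tn s t n + un s t (n + 1) := by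
  rw [Tn, Tn, un]
  have hext : ∑ c ∈ Finset.Icc 1 n, (if gf s t c ≤ n then Sc s t (n - gf s t c) else 0)
      = ∑ c ∈ Finset.Icc 1 (n + 1), (if gf s t c ≤ n then Sc s t (n - gf s t c) else 0) := by
    apply Finset.sum_subset (Finset.Icc_subset_Icc_right (Nat.le_succ n))
    intro c hc hc'
    simp only [Finset.mem_Icc] at hc hc'
    have := gf_ge s t c
    rw [if_neg (by omega)]
  rw [hext, ← Finset.sum_add_distrib]
  apply Finset.sum_congr rfl
  intro c hc
  by_cases h1 : gf s t c ≤ n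
  · rw [if_pos (by omega), if_pos h1, if_pos (by omega)]
    have he : n + 1 - gf s t c = (n - gf s t c) + 1 := by omega
    rw [he, Sc, Sc, Finset.sum_Icc_succ_top (Nat.zero_le _)]
  · by_cases h2 : gf s t c = n + 1
    · rw [if_pos (by omega), if_neg h1, if_pos (by omega), h2, Nat.sub_self]
      simp [Sc]
    · rw [if_neg (by omega), if_neg h1, if_neg (by omega)]

lemma L1' (s t n : ℕ) (hs : 0 < s) :
    arndtCount s t (n + 1) = arndtCount s t n + un s t (n + 1) := by
  rw [L1 s t (n + 1) hs, L1 s t n hs, Tsucc]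
  omega

lemma ushift (s t n : ℕ) (hs : 0 < s) (hn : s + t + 1 ≤ n) :
    un s t n = (∑ c ∈ Finset.Icc 1 s, arndtCount s t (n - gf s t c)) + un s t (n - (s + t)) := by
  rw [un]
  have hsplit : ∑ c ∈ Finset.Icc 1 n, (if gf s t c ≤ n then arndtCount s t (n - gf s t c) else 0)
      = (∑ c ∈ Finset.Icc 1 s, (if gf s t c ≤ n then arndtCount s t (n - gf s t c) else 0))
        + ∑ c ∈ Finset.Ioc s n, (if gf s t c ≤ n then arndtCount s t (n - gf s t c) else 0) := by
    have e1 : Finset.Icc 1 n = Finset.Ioc 0 n := by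
      ext x; simp only [Finset.mem_Icc, Finset.mem_Ioc]; omega
    have e2 : Finset.Icc 1 s = Finset.Ioc 0 s := by
      ext x; simp only [Finset.mem_Icc, Finset.mem_Ioc]; omega
    rw [e1, e2]
    exact (Finset.sum_Ioc_consecutive _ (Nat.zero_le s) (by omega)).symm
  rw [hsplit]
  congr 1
  · apply Finset.sum_congr rfl
    intro c hc
    simp only [Finset.mem_Icc] at hc
    have : gf s t c ≤ s + t + 1 := by
      have := gf_mono s t hc.2
      rw [gf_s s t hs] at this
      exact this
    rw [if_pos (by omega)]
  · -- shrink to Icc (s+1) (n - t), then shift index by s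
    have hshrink : ∑ c ∈ Finset.Ioc s n, (if gf s t c ≤ n then arndtCount s t (n - gf s t c) else 0)
        = ∑ c ∈ Finset.Icc (s + 1) (n - t),
            (if gf s t c ≤ n then arndtCount s t (n - gf s t c) else 0) := by
      symm
      apply Finset.sum_subset
      · intro c hc
        simp only [Finset.mem_Icc, Finset.mem_Ioc] at hc ⊢
        omega
      · intro c hc hc'
        simp only [Finset.mem_Icc, Finset.mem_Ioc] at hc hc'
        have := gf_big s t c hs (by omega)
        rw [if_neg (by omega)]
    rw [hshrink, un]
    symm
    refine Finset.sum_nbij' (fun c => c + s) (fun c => c - s) ?_ ?_ ?_ ?_ ?_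
    · intro a ha; simp only [Finset.mem_Icc] at ha ⊢; omega
    · intro a ha; simp only [Finset.mem_Icc] at ha ⊢; omega
    · intro a ha; simp only [Finset.mem_Icc] at ha; show a + s - s = a; omega
    · intro a ha; simp only [Finset.mem_Icc] at ha; show a - s + s = a; omega
    · intro a ha
      simp only [Finset.mem_Icc] at ha
      rw [gf_shift s t a hs]
      by_cases h : gf s t a ≤ n - (s + t)
      · rw [if_pos h, if_pos (by omega)]
        congr 1
        omega
      · rw [if_neg h, if_neg (by omega)]

lemma ceil_eq_gf (s t r : ℕ) (hs : 0 < s) : r + (r * t + 1) ⌈/⌉ s = gf s t r := by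
  have h1 : (r * t + 1) ⌈/⌉ s = (r * t + 1 + s - 1) / s := Nat.ceilDiv_eq_add_pred_div _ _
  have h2 : r * t + 1 + s - 1 = t * r + s := by rw [mul_comm r t]; omega
  rw [h1, h2, Nat.add_div_right _ hs, gf]
  ring


theorem arndt_recurrence (s t n : ℕ) (hs : 0 < s) (ht : 0 < t)
    (hco : Nat.Coprime s t) (hn : s + t < n) :
    arndtCount s t n =
      arndtCount s t (n - (s + t)) +
        ∑ r ∈ Finset.range s, arndtCount s t (n - (r + (r * t + 1) ⌈/⌉ s)) := by
  -- rewrite the range sum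
  have hsum : ∑ r ∈ Finset.range s, arndtCount s t (n - (r + (r * t + 1) ⌈/⌉ s))
      = arndtCount s t (n - 1) + ∑ r ∈ Finset.Icc 1 (s - 1), arndtCount s t (n - gf s t r) := by
    have h1 : ∀ r, arndtCount s t (n - (r + (r * t + 1) ⌈/⌉ s))
        = arndtCount s t (n - gf s t r) := by
      intro r; rw [ceil_eq_gf s t r hs]
    rw [Finset.sum_congr rfl fun r _ => h1 r]
    have h2 : Finset.range s = insert 0 (Finset.Icc 1 (s - 1)) := by
      ext x; simp only [Finset.mem_range, Finset.mem_insert, Finset.mem_Icc]; omega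
    rw [h2, Finset.sum_insert (by simp), gf_zero]
  rw [hsum]
  -- main identities
  have key1 : arndtCount s t n = arndtCount s t (n - 1) + un s t n := by
    have := L1' s t (n - 1) hs
    rw [show n - 1 + 1 = n by omega] at this
    exact this
  have key2 : arndtCount s t (n - (s + t))
      = arndtCount s t (n - (s + t) - 1) + un s t (n - (s + t)) := by
    have := L1' s t (n - (s + t) - 1) hs
    rw [show n - (s + t) - 1 + 1 = n - (s + t) by omega] at this
    exact this
  have key3 := ushift s t n hs (by omega)
  have key4 : ∑ c ∈ Finset.Icc 1 s, arndtCount s t (n - gf s t c)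
      = ∑ c ∈ Finset.Icc 1 (s - 1), arndtCount s t (n - gf s t c)
        + arndtCount s t (n - (s + t) - 1) := by
    rw [show s = (s - 1) + 1 by omega]
    rw [Finset.sum_Icc_succ_top (by omega)]
    rw [show s - 1 + 1 = s by omega, gf_s s t hs,
      show n - (s + t + 1) = n - (s + t) - 1 by omega]
  rw [key4] at key3
  omega
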